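/- arXiv:2208.12186 — 5 statements merged into one kernel-verified Lean document; each statement's English description precedes it below -/
import Mathlib

section
/- For all real x > 0 and all real y and ν, the function t ↦ t^{ν-1} e^{-x/t - y t} is integrable on the open interval (0, 1). -/
open MeasureTheory Real

/-- For all real `x > 0` and all real `y`, `ν`, the function
`t ↦ t^{ν-1} e^{-x/t - y t}` is integrable on the open interval `(0, 1)`. -/
theorem leakyAquifer_alt_integrand_integrableOn (x y ν : ℝ) (hx : 0 < x) :
    IntegrableOn (fun t : ℝ => t ^ (ν - 1) * Real.exp (-x / t - y * t))
      (Set.Ioo 0 1) := by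
  obtain ⟨n, hn⟩ := exists_nat_ge (1 - ν)
  apply Measure.integrableOn_of_bounded
    (M := n.factorial / x ^ n * Real.exp |y|)
  · exact (measure_Ioo_lt_top).ne
  · apply Measurable.aestronglyMeasurable
    apply Measurable.mul
    · fun_prop
    · exact Real.measurable_exp.comp (by fun_prop)
  · filter_upwards [ae_restrict_mem measurableSet_Ioo] with t ht
    obtain ⟨ht0, ht1⟩ := ht
    rw [Real.norm_eq_abs, abs_mul, abs_of_pos (Real.rpow_pos_of_pos ht0 _),
      abs_of_pos (Real.exp_pos _)]
    have hxt : 0 < x / t := div_pos hx ht0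
    have h1 : Real.exp (-x / t - y * t) = Real.exp (-(x / t)) * Real.exp (-(y * t)) := by
      rw [← Real.exp_add]; ring_nf
    have hpos : 0 < (x / t) ^ n / n.factorial := by positivity
    have h2 : Real.exp (-(x / t)) ≤ n.factorial / (x / t) ^ n := by
      rw [Real.exp_neg]
      calc (Real.exp (x / t))⁻¹ ≤ ((x / t) ^ n / n.factorial)⁻¹ :=
            inv_anti₀ hpos (Real.pow_div_factorial_le_exp _ hxt.le n)
        _ = n.factorial / (x / t) ^ n := by
            rw [inv_div]
    have h3 : Real.exp (-(y * t)) ≤ Real.exp |y| := by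
      apply Real.exp_le_exp.2
      calc -(y * t) ≤ |y * t| := neg_le_abs _
        _ = |y| * t := by rw [abs_mul, abs_of_pos ht0]
        _ ≤ |y| * 1 := by nlinarith [abs_nonneg y]
        _ = |y| := mul_one _
    have h4 : t ^ (ν - 1) * (n.factorial / (x / t) ^ n)
        ≤ n.factorial / x ^ n := by
      have : t ^ (ν - 1) * (n.factorial / (x / t) ^ n)
          = (n.factorial / x ^ n) * (t ^ (ν - 1) * t ^ (n : ℝ)) := by
        rw [div_pow, Real.rpow_natCast]
        field_simp
      rw [this, ← Real.rpow_add ht0]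
      have hle : t ^ (ν - 1 + n) ≤ 1 :=
        Real.rpow_le_one ht0.le ht1.le (by linarith)
      calc (n.factorial : ℝ) / x ^ n * t ^ (ν - 1 + (n : ℝ))
          ≤ n.factorial / x ^ n * 1 := by
            apply mul_le_mul_of_nonneg_left hle (by positivity)
        _ = n.factorial / x ^ n := mul_one _
    calc t ^ (ν - 1) * Real.exp (-x / t - y * t)
        = t ^ (ν - 1) * Real.exp (-(x / t)) * Real.exp (-(y * t)) := by
          rw [h1]; ring
      _ ≤ t ^ (ν - 1) * (n.factorial / (x / t) ^ n) * Real.exp |y| := by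
          apply mul_le_mul _ h3 (Real.exp_pos _).le (by positivity)
          exact mul_le_mul_of_nonneg_left h2 (Real.rpow_pos_of_pos ht0 _).le
      _ ≤ n.factorial / x ^ n * Real.exp |y| :=
          mul_le_mul_of_nonneg_right h4 (Real.exp_pos _).le
end

section
/- For all real x > 0 and all real y and ν, the series ∑_{j=0}^∞ Γ(-ν-j, x) · (-x y)^j / j! converges absolutely and K_ν(x,y) = x^ν · ∑_{j=0}^∞ Γ(-ν-j, x) · (-x y)^j / j!, where Γ(α, x) = ∫_x^∞ t^{α-1} e^{-t} dt denotes the upper incomplete gamma function. -/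
open MeasureTheory Real

/-- The upper incomplete gamma function `Γ(α, x) = ∫_x^∞ t^{α-1} e^{-t} dt`. -/
noncomputable def upperIncGamma (α x : ℝ) : ℝ :=
  ∫ t in Set.Ioi x, t ^ (α - 1) * Real.exp (-t)

lemma aux_integ (x : ℝ) (hx : 0 < x) (α : ℝ) :
    IntegrableOn (fun t : ℝ => Real.exp (-x * t) * t ^ α) (Set.Ioi 1) := by
  have h0 : IntegrableOn (fun t : ℝ => t ^ (max α 0) * Real.exp (-x * t)) (Set.Ioi 0) := by
    have := integrableOn_rpow_mul_exp_neg_mul_rpow (p := 1) (s := max α 0) (b := x)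
      (lt_of_lt_of_le (by norm_num) (le_max_right α 0)) one_pos hx
    simpa [Real.rpow_one] using this
  have h1 : IntegrableOn (fun t : ℝ => t ^ (max α 0) * Real.exp (-x * t)) (Set.Ioi 1) :=
    h0.mono_set (Set.Ioi_subset_Ioi zero_le_one)
  refine Integrable.mono h1 ?_ ?_
  · exact (by fun_prop : Measurable fun t : ℝ =>
      Real.exp (-x * t) * t ^ α).aestronglyMeasurable
  · rw [ae_restrict_iff' measurableSet_Ioi]
    filter_upwards with t ht
    have ht1 : (1 : ℝ) ≤ t := le_of_lt ht
    have ht0 : 0 < t := lt_of_lt_of_le one_pos ht1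
    have : t ^ α ≤ t ^ (max α 0) := Real.rpow_le_rpow_of_exponent_le ht1 (le_max_left _ _)
    rw [Real.norm_eq_abs, Real.norm_eq_abs, abs_of_nonneg (by positivity),
      abs_of_nonneg (by positivity)]
    calc Real.exp (-x * t) * t ^ α ≤ Real.exp (-x * t) * t ^ (max α 0) := by
          exact mul_le_mul_of_nonneg_left this (Real.exp_nonneg _)
      _ = t ^ (max α 0) * Real.exp (-x * t) := mul_comm _ _

lemma aux_val (x : ℝ) (hx : 0 < x) (α : ℝ) :
    (∫ t in Set.Ioi (1 : ℝ), Real.exp (-x * t) * t ^ α)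
      = x ^ (-(α + 1)) * upperIncGamma (α + 1) x := by
  have h := integral_comp_mul_left_Ioi (fun s : ℝ => Real.exp (-s) * s ^ α) 1 hx
  have key : (∫ t in Set.Ioi (1 : ℝ), Real.exp (-(x * t)) * (x * t) ^ α)
      = x ^ α * ∫ t in Set.Ioi (1 : ℝ), Real.exp (-x * t) * t ^ α := by
    rw [← integral_const_mul]
    refine setIntegral_congr_fun measurableSet_Ioi fun t ht => ?_
    have ht0 : (0 : ℝ) < t := lt_trans one_pos ht
    rw [Real.mul_rpow hx.le ht0.le, neg_mul]
    ring
  simp only [mul_one] at h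
  rw [key] at h
  have hG : upperIncGamma (α + 1) x = ∫ s in Set.Ioi x, Real.exp (-s) * s ^ α := by
    rw [upperIncGamma, add_sub_cancel_right]
    exact setIntegral_congr_fun measurableSet_Ioi fun s _ => mul_comm _ _
  have hxα : (x : ℝ) ^ α ≠ 0 := (Real.rpow_pos_of_pos hx α).ne'
  rw [hG]
  rw [smul_eq_mul] at h
  have : (∫ t in Set.Ioi (1 : ℝ), Real.exp (-x * t) * t ^ α)
      = (x ^ α)⁻¹ * (x⁻¹ * ∫ s in Set.Ioi x, Real.exp (-s) * s ^ α) := by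
    field_simp at h ⊢
    linarith [h]
  rw [this, Real.rpow_neg hx.le, Real.rpow_add hx, Real.rpow_one, mul_inv]
  ring

/-- For all real `x > 0` and all real `y`, `ν`, the series
`∑_{j=0}^∞ Γ(-ν-j, x) (-x y)^j / j!` converges absolutely and
`K_ν(x, y) = x^ν ∑_{j=0}^∞ Γ(-ν-j, x) (-x y)^j / j!`. -/
theorem leakyAquifer_eq_tsum_upperIncGamma (x y ν : ℝ) (hx : 0 < x) :
    (Summable fun j : ℕ =>
        |upperIncGamma (-ν - j) x * (-(x * y)) ^ j / (Nat.factorial j)|) ∧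
      (∫ t in Set.Ioi (1 : ℝ), Real.exp (-x * t - y / t) * t ^ (-(ν + 1)))
        = x ^ ν *
          ∑' j : ℕ, upperIncGamma (-ν - j) x * (-(x * y)) ^ j / (Nat.factorial j) := by
  -- the summand functions
  set F : ℕ → ℝ → ℝ := fun j t =>
    Real.exp (-x * t) * t ^ (-(ν + 1) - (j : ℝ)) * ((-y) ^ j / (Nat.factorial j)) with hF
  have hFint : ∀ j, IntegrableOn (F j) (Set.Ioi 1) := fun j =>
    (aux_integ x hx _).mul_const _
  -- value of each term integral
  have hval : ∀ j : ℕ, (∫ t in Set.Ioi (1 : ℝ), F j t)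
      = x ^ ν * (upperIncGamma (-ν - j) x * (-(x * y)) ^ j / (Nat.factorial j)) := by
    intro j
    rw [hF]
    simp only
    rw [integral_mul_const, aux_val x hx]
    have h1 : (-(ν + 1) - (j : ℝ) + 1) = -ν - j := by ring
    have h2 : (-(-(ν + 1) - (j : ℝ) + 1)) = ν + j := by ring
    rw [h2, h1, Real.rpow_add hx, Real.rpow_natCast]
    have : (-(x * y)) ^ j = x ^ j * (-y) ^ j := by
      rw [← mul_pow]; ring_nf
    rw [this]
    ring
  -- bound on the integrals of norms
  set C : ℝ := ∫ t in Set.Ioi (1 : ℝ), Real.exp (-x * t) * t ^ (max (-(ν + 1)) 0) with hC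
  have hnorm : ∀ j : ℕ, (∫ t in Set.Ioi (1 : ℝ), ‖F j t‖)
      ≤ C * (|y| ^ j / (Nat.factorial j)) := by
    intro j
    have : (∫ t in Set.Ioi (1 : ℝ), ‖F j t‖)
        ≤ ∫ t in Set.Ioi (1 : ℝ),
            (Real.exp (-x * t) * t ^ (max (-(ν + 1)) 0)) * (|y| ^ j / (Nat.factorial j)) := by
      refine setIntegral_mono_on (hFint j).norm
        ((aux_integ x hx _).mul_const _) measurableSet_Ioi fun t ht => ?_
      have ht1 : (1 : ℝ) ≤ t := le_of_lt ht
      have ht0 : (0 : ℝ) < t := lt_of_lt_of_le one_pos ht1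
      rw [hF]
      simp only [norm_mul, Real.norm_eq_abs]
      rw [abs_of_nonneg (Real.exp_nonneg _), abs_of_nonneg (Real.rpow_nonneg ht0.le _)]
      have hb : t ^ (-(ν + 1) - (j : ℝ)) ≤ t ^ (max (-(ν + 1)) 0) :=
        Real.rpow_le_rpow_of_exponent_le ht1
          ((sub_le_self _ (Nat.cast_nonneg j)).trans (le_max_left (-(ν + 1)) 0))
      have hy : |(-y) ^ j / (Nat.factorial j : ℝ)| = |y| ^ j / (Nat.factorial j) := by
        rw [abs_div, abs_pow, abs_neg, Nat.abs_cast]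
      rw [hy]
      have := mul_le_mul_of_nonneg_left hb (Real.exp_nonneg (-x * t))
      exact mul_le_mul_of_nonneg_right this (by positivity)
    rw [integral_mul_const] at this
    exact this
  have hnorm_sum : Summable fun j : ℕ => ∫ t in Set.Ioi (1 : ℝ), ‖F j t‖ := by
    refine Summable.of_nonneg_of_le (fun j => integral_nonneg fun t => norm_nonneg _)
      hnorm ?_
    simpa [mul_div_assoc] using (Real.summable_pow_div_factorial |y|).mul_left C
  -- swap sum and integral
  have hswap := integral_tsum_of_summable_integral_norm
    (μ := volume.restrict (Set.Ioi (1 : ℝ))) (F := F)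
    (fun j => hFint j) hnorm_sum
  -- pointwise identity
  have hptwise : ∀ t ∈ Set.Ioi (1 : ℝ),
      (∑' j : ℕ, F j t) = Real.exp (-x * t - y / t) * t ^ (-(ν + 1)) := by
    intro t ht
    have ht0 : (0 : ℝ) < t := lt_trans one_pos ht
    have hFt : ∀ j : ℕ, F j t
        = (Real.exp (-x * t) * t ^ (-(ν + 1))) * ((-y / t) ^ j / (Nat.factorial j)) := by
      intro j
      rw [hF]
      simp only
      have hpow : t ^ (-(j : ℝ)) = (t ^ j)⁻¹ := by
        rw [Real.rpow_neg ht0.le, Real.rpow_natCast]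
      rw [sub_eq_add_neg, Real.rpow_add ht0, hpow, div_pow]
      ring
    rw [tsum_congr hFt, tsum_mul_left]
    have hexp : (∑' j : ℕ, (-y / t) ^ j / (Nat.factorial j)) = Real.exp (-y / t) := by
      rw [Real.exp_eq_exp_ℝ, NormedSpace.exp_eq_tsum_div]
    rw [hexp, sub_eq_add_neg, Real.exp_add, neg_div]
    ring
  have hintcongr : (∫ t in Set.Ioi (1 : ℝ), Real.exp (-x * t - y / t) * t ^ (-(ν + 1)))
      = ∫ t in Set.Ioi (1 : ℝ), (∑' j : ℕ, F j t) :=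
    setIntegral_congr_fun measurableSet_Ioi fun t ht => (hptwise t ht).symm
  have hmain : (∫ t in Set.Ioi (1 : ℝ), Real.exp (-x * t - y / t) * t ^ (-(ν + 1)))
      = ∑' j : ℕ, x ^ ν * (upperIncGamma (-ν - j) x * (-(x * y)) ^ j / (Nat.factorial j)) := by
    rw [hintcongr, ← hswap]
    exact tsum_congr hval
  constructor
  · -- summability
    have hsum2 : Summable fun j : ℕ => |∫ t in Set.Ioi (1 : ℝ), F j t| := by
      refine Summable.of_nonneg_of_le (fun j => abs_nonneg _) (fun j => ?_) hnorm_sum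
      exact norm_integral_le_integral_norm (F j)
    have : Summable fun j : ℕ =>
        (x ^ ν)⁻¹ * |∫ t in Set.Ioi (1 : ℝ), F j t| := hsum2.mul_left _
    refine this.congr fun j => ?_
    rw [hval j, abs_mul, abs_of_nonneg (Real.rpow_nonneg hx.le ν), ← mul_assoc,
      inv_mul_cancel₀ (Real.rpow_pos_of_pos hx ν).ne', one_mul]
  · rw [hmain, tsum_mul_left]
end

section
/- For all real x > 0 and all real y and ν, define g : (0,1) → ℝ by g(s) = τ(s)^{ν-1} e^{-x/τ(s) - y τ(s)} / ( (1-s)² · cosh²(s/(1-s)) ), where τ(s) = tanh(s/(1-s)). Then g is smooth on (0,1), and for every natural number n the n-th derivative of g tends to 0 as s → 0⁺ and as s → 1⁻. In particular g extends to a function on [0,1] all of whose one-sided derivatives of every order vanish at both endpoints. -/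
open Real Filter Set Topology

namespace FlatAux

noncomputable def U (s : ℝ) : ℝ := s / (1 - s)
noncomputable def A (s : ℝ) : ℝ := (1 - s)⁻¹
noncomputable def B (s : ℝ) : ℝ := Real.tanh (U s)
noncomputable def C (s : ℝ) : ℝ := (Real.tanh (U s))⁻¹
noncomputable def W (s : ℝ) : ℝ := 1 - B s ^ 2

lemma tanh_eq (v : ℝ) : Real.tanh v = Real.sinh v / Real.cosh v :=
  Real.tanh_eq_sinh_div_cosh v

lemma one_sub_tanh_sq (v : ℝ) : 1 - Real.tanh v ^ 2 = (Real.cosh v ^ 2)⁻¹ := by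
  have h := (Real.cosh_pos v).ne'
  rw [tanh_eq, div_pow]
  field_simp
  linarith [Real.cosh_sq_sub_sinh_sq v]

lemma hasDerivAt_tanh (v : ℝ) :
    HasDerivAt Real.tanh (1 - Real.tanh v ^ 2) v := by
  have h : HasDerivAt (fun w => Real.sinh w / Real.cosh w)
      ((Real.cosh v * Real.cosh v - Real.sinh v * Real.sinh v) / Real.cosh v ^ 2) v :=
    (Real.hasDerivAt_sinh v).div (Real.hasDerivAt_cosh v) (Real.cosh_pos v).ne'
  have h2 : (fun w => Real.sinh w / Real.cosh w) = Real.tanh := by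
    funext w; rw [tanh_eq]
  rw [h2] at h
  convert h using 1
  rw [one_sub_tanh_sq]
  have := (Real.cosh_pos v).ne'
  field_simp
  linarith [Real.cosh_sq_sub_sinh_sq v]

lemma tanh_pos {v : ℝ} (hv : 0 < v) : 0 < Real.tanh v := by
  rw [tanh_eq]
  exact div_pos (Real.sinh_pos_iff.2 hv) (Real.cosh_pos v)

lemma tanh_lt_one (v : ℝ) : Real.tanh v < 1 := by
  rw [tanh_eq]
  exact (div_lt_one (Real.cosh_pos v)).2 (Real.sinh_lt_cosh v)

lemma contDiff_tanh : ContDiff ℝ (⊤ : ℕ∞) Real.tanh := by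
  have h2 : (fun w => Real.sinh w / Real.cosh w) = Real.tanh := by
    funext w; rw [tanh_eq]
  rw [← h2]
  exact Real.contDiff_sinh.div Real.contDiff_cosh fun v => (Real.cosh_pos v).ne'

lemma tanh_tendsto_one : Tendsto Real.tanh atTop (𝓝 1) := by
  have key : ∀ v : ℝ, Real.tanh v
      = (1 - Real.exp (-v) * Real.exp (-v)) / (1 + Real.exp (-v) * Real.exp (-v)) := by
    intro v
    have h1 : Real.exp v > 0 := Real.exp_pos v
    have h2 : Real.exp (-v) > 0 := Real.exp_pos (-v)
    have h3 : Real.exp v * Real.exp (-v) = 1 := by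
      rw [← Real.exp_add]; simp
    rw [tanh_eq, Real.sinh_eq, Real.cosh_eq]
    rw [div_eq_div_iff (by positivity) (by positivity)]
    field_simp
    nlinarith [h3]
  rw [show Real.tanh = fun v => (1 - Real.exp (-v) * Real.exp (-v)) / (1 + Real.exp (-v) * Real.exp (-v)) from funext key]
  have he : Tendsto (fun v : ℝ => Real.exp (-v)) atTop (𝓝 0) := Real.tendsto_exp_neg_atTop_nhds_zero
  have : Tendsto (fun v : ℝ => (1 - Real.exp (-v) * Real.exp (-v)) / (1 + Real.exp (-v) * Real.exp (-v)))
      atTop (𝓝 ((1 - 0 * 0) / (1 + 0 * 0))) :=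
    (tendsto_const_nhds.sub (he.mul he)).div (tendsto_const_nhds.add (he.mul he)) (by norm_num)
  simpa using this


-- basic facts on Ioo 0 1
lemma sub_ne {s : ℝ} (hs : s ∈ Set.Ioo (0:ℝ) 1) : (1 : ℝ) - s ≠ 0 := by
  have := hs.2; intro h; linarith

lemma U_pos {s : ℝ} (hs : s ∈ Set.Ioo (0:ℝ) 1) : 0 < U s :=
  div_pos hs.1 (by linarith [hs.2])

lemma B_pos {s : ℝ} (hs : s ∈ Set.Ioo (0:ℝ) 1) : 0 < B s := tanh_pos (U_pos hs)

lemma hasDerivAt_U {s : ℝ} (hs : s ∈ Set.Ioo (0:ℝ) 1) :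
    HasDerivAt U (A s ^ 2) s := by
  have h : HasDerivAt (fun t : ℝ => t / (1 - t))
      ((1 * (1 - s) - s * (0 - 1)) / (1 - s) ^ 2) s :=
    (hasDerivAt_id s).div ((hasDerivAt_const s 1).sub (hasDerivAt_id s)) (sub_ne hs)
  refine h.congr_deriv ?_
  unfold A
  rw [inv_pow]
  field_simp
  ring

lemma hasDerivAt_A {s : ℝ} (hs : s ∈ Set.Ioo (0:ℝ) 1) :
    HasDerivAt A (A s * A s) s := by
  have h : HasDerivAt (fun t : ℝ => (1 - t)⁻¹)
      (-(0 - 1) / (1 - s) ^ 2) s :=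
    (((hasDerivAt_const s 1).sub (hasDerivAt_id s))).inv (sub_ne hs)
  refine h.congr_deriv ?_
  unfold A
  have h1 := sub_ne hs
  field_simp
  ring

lemma hasDerivAt_B {s : ℝ} (hs : s ∈ Set.Ioo (0:ℝ) 1) :
    HasDerivAt B (W s * A s ^ 2) s := by
  have h := (hasDerivAt_tanh (U s)).comp s (hasDerivAt_U hs)
  exact h

lemma hasDerivAt_C {s : ℝ} (hs : s ∈ Set.Ioo (0:ℝ) 1) :
    HasDerivAt C ((1 - C s ^ 2) * A s ^ 2) s := by
  have hb := (B_pos hs).ne'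
  have h := (hasDerivAt_B hs).inv hb
  refine h.congr_deriv ?_
  unfold W C B
  have hb' : Real.tanh (U s) ≠ 0 := hb
  field_simp
  ring

-- the algebra of nice functions
inductive Nice : (ℝ → ℝ) → Prop
  | const (k : ℝ) : Nice (fun _ => k)
  | va : Nice A
  | vb : Nice B
  | vc : Nice C
  | add {f g} : Nice f → Nice g → Nice (fun s => f s + g s)
  | mul {f g} : Nice f → Nice g → Nice (fun s => f s * g s)

lemma Nice.of_eq {f g : ℝ → ℝ} (hf : Nice f) (h : ∀ s, f s = g s) : Nice g := by
  rwa [show f = g from funext h] at hf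

lemma Nice.w : Nice W := by
  have : Nice (fun s => 1 + (-1) * (B s * B s)) :=
    (Nice.const 1).add ((Nice.const (-1)).mul (Nice.vb.mul Nice.vb))
  exact this.of_eq fun s => by unfold W; ring

lemma Nice.hasDerivAt {q : ℝ → ℝ} (hq : Nice q) :
    ∃ q' : ℝ → ℝ, Nice q' ∧ ∀ s ∈ Set.Ioo (0:ℝ) 1, HasDerivAt q (q' s) s := by
  induction hq with
  | const k => exact ⟨fun _ => 0, Nice.const 0, fun s _ => hasDerivAt_const s k⟩
  | va => exact ⟨fun s => A s * A s, Nice.va.mul Nice.va, fun s hs => hasDerivAt_A hs⟩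
  | vb =>
    refine ⟨fun s => W s * (A s * A s), Nice.w.mul (Nice.va.mul Nice.va), fun s hs => ?_⟩
    have := hasDerivAt_B hs
    convert this using 1
    rw [sq]
  | vc =>
    refine ⟨fun s => (1 + (-1) * (C s * C s)) * (A s * A s),
      ((Nice.const 1).add ((Nice.const (-1)).mul (Nice.vc.mul Nice.vc))).mul
        (Nice.va.mul Nice.va), fun s hs => ?_⟩
    have := hasDerivAt_C hs
    convert this using 1
    ring
  | @add f g hf hg ihf ihg =>
    obtain ⟨f', hf', hdf⟩ := ihf
    obtain ⟨g', hg', hdg⟩ := ihg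
    exact ⟨fun s => f' s + g' s, hf'.add hg',
      fun s hs => (hdf s hs).add (hdg s hs)⟩
  | @mul f g hf hg ihf ihg =>
    obtain ⟨f', hf', hdf⟩ := ihf
    obtain ⟨g', hg', hdg⟩ := ihg
    exact ⟨fun s => f' s * g s + f s * g' s, (hf'.mul hg).add (hf.mul hg'),
      fun s hs => (hdf s hs).mul (hdg s hs)⟩


-- smoothness
lemma contDiffOn_U : ContDiffOn ℝ (⊤ : ℕ∞) U (Set.Ioo 0 1) := by
  apply ContDiffOn.div contDiffOn_id (contDiffOn_const.sub contDiffOn_id)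
  exact fun s hs => sub_ne hs

lemma contDiffOn_A : ContDiffOn ℝ (⊤ : ℕ∞) A (Set.Ioo 0 1) := by
  exact (contDiffOn_const.sub contDiffOn_id).inv fun s hs => sub_ne hs

lemma contDiffOn_B : ContDiffOn ℝ (⊤ : ℕ∞) B (Set.Ioo 0 1) :=
  contDiff_tanh.comp_contDiffOn contDiffOn_U

lemma contDiffOn_C : ContDiffOn ℝ (⊤ : ℕ∞) C (Set.Ioo 0 1) :=
  contDiffOn_B.inv fun s hs => (B_pos hs).ne'

lemma contDiffOn_W : ContDiffOn ℝ (⊤ : ℕ∞) W (Set.Ioo 0 1) :=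
  contDiffOn_const.sub (contDiffOn_B.pow 2)

lemma Nice.contDiffOn {q : ℝ → ℝ} (hq : Nice q) :
    ContDiffOn ℝ (⊤ : ℕ∞) q (Set.Ioo 0 1) := by
  induction hq with
  | const k => exact contDiffOn_const
  | va => exact contDiffOn_A
  | vb => exact contDiffOn_B
  | vc => exact contDiffOn_C
  | @add f g hf hg ihf ihg => exact ihf.add ihg
  | @mul f g hf hg ihf ihg => exact ihf.mul ihg

-- filter facts
lemma mem_Ioo_ev0 : ∀ᶠ s in 𝓝[>] (0:ℝ), s ∈ Set.Ioo (0:ℝ) 1 :=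
  Ioo_mem_nhdsGT_of_mem (by constructor <;> norm_num)

lemma mem_Ioo_ev1 : ∀ᶠ s in 𝓝[<] (1:ℝ), s ∈ Set.Ioo (0:ℝ) 1 :=
  Ioo_mem_nhdsLT_of_mem (by constructor <;> norm_num)

lemma tendsto_U0 : Tendsto U (𝓝[>] (0:ℝ)) (𝓝 0) := by
  have h : ContinuousAt U 0 := by
    apply ContinuousAt.div continuousAt_id (continuousAt_const.sub continuousAt_id)
    norm_num
  have h2 : Tendsto U (𝓝[>] (0:ℝ)) (𝓝 (U 0)) := h.tendsto.mono_left nhdsWithin_le_nhds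
  simpa [U] using h2

lemma tendsto_B0 : Tendsto B (𝓝[>] (0:ℝ)) (𝓝 0) := by
  have h : Tendsto Real.tanh (𝓝 0) (𝓝 (Real.tanh 0)) :=
    (contDiff_tanh.continuous.continuousAt).tendsto
  rw [Real.tanh_zero] at h
  exact h.comp tendsto_U0

lemma tendsto_B0' : Tendsto B (𝓝[>] (0:ℝ)) (𝓝[>] 0) := by
  apply tendsto_nhdsWithin_of_tendsto_nhds_of_eventually_within _ tendsto_B0
  filter_upwards [mem_Ioo_ev0] with s hs
  exact B_pos hs

lemma tendsto_A0 : Tendsto A (𝓝[>] (0:ℝ)) (𝓝 1) := by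
  have h : ContinuousAt A 0 := by
    apply ContinuousAt.inv₀ (continuousAt_const.sub continuousAt_id)
    norm_num
  have h2 : Tendsto A (𝓝[>] (0:ℝ)) (𝓝 (A 0)) := h.tendsto.mono_left nhdsWithin_le_nhds
  simpa [A] using h2

lemma tendsto_U1 : Tendsto U (𝓝[<] (1:ℝ)) atTop := by
  have h1 : Tendsto (fun s : ℝ => 1 - s) (𝓝[<] (1:ℝ)) (𝓝[>] 0) := by
    apply tendsto_nhdsWithin_of_tendsto_nhds_of_eventually_within
    · have h0 : ContinuousAt (fun s : ℝ => 1 - s) 1 := continuousAt_const.sub continuousAt_id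
      have h2 : Tendsto (fun s : ℝ => 1 - s) (𝓝[<] (1:ℝ)) (𝓝 (1 - 1)) :=
        h0.tendsto.mono_left nhdsWithin_le_nhds
      simpa using h2
    · filter_upwards [eventually_mem_nhdsWithin] with s hs
      simp only [Set.mem_Iio] at hs
      simp [Set.mem_Ioi]; linarith
  have h2 : Tendsto (fun s : ℝ => (1 - s)⁻¹) (𝓝[<] (1:ℝ)) atTop :=
    tendsto_inv_nhdsGT_zero.comp h1
  have h3 : Tendsto (fun s : ℝ => s) (𝓝[<] (1:ℝ)) (𝓝 1) :=
    tendsto_id.mono_left nhdsWithin_le_nhds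
  have := Filter.Tendsto.pos_mul_atTop one_pos h3 h2
  exact this.congr fun s => (div_eq_mul_inv s (1-s)).symm

lemma tendsto_B1 : Tendsto B (𝓝[<] (1:ℝ)) (𝓝 1) :=
  tanh_tendsto_one.comp tendsto_U1

lemma tendsto_C1 : Tendsto C (𝓝[<] (1:ℝ)) (𝓝 1) := by
  have := tendsto_B1.inv₀ one_ne_zero
  rw [inv_one] at this; exact this

lemma tendsto_one_sub_1 : Tendsto (fun s : ℝ => 1 - s) (𝓝[<] (1:ℝ)) (𝓝 0) := by
  have h0 : ContinuousAt (fun s : ℝ => 1 - s) 1 := continuousAt_const.sub continuousAt_id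
  have h2 : Tendsto (fun s : ℝ => 1 - s) (𝓝[<] (1:ℝ)) (𝓝 (1 - 1)) :=
    h0.tendsto.mono_left nhdsWithin_le_nhds
  simpa using h2

-- pole structure at 0
lemma Nice.pole0 {q : ℝ → ℝ} (hq : Nice q) :
    ∃ (m : ℕ) (L : ℝ), Tendsto (fun s => B s ^ m * q s) (𝓝[>] (0:ℝ)) (𝓝 L) := by
  induction hq with
  | const k => exact ⟨0, k, by simpa using tendsto_const_nhds⟩
  | va => exact ⟨0, 1, by simpa using tendsto_A0⟩
  | vb => exact ⟨0, 0, by simpa using tendsto_B0⟩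
  | vc =>
    refine ⟨1, 1, ?_⟩
    apply Tendsto.congr' _ (tendsto_const_nhds : Tendsto (fun _ : ℝ => (1:ℝ)) _ _)
    filter_upwards [mem_Ioo_ev0] with s hs
    have hb := (B_pos hs).ne'
    simp only [pow_one]
    exact (mul_inv_cancel₀ hb).symm
  | @add f g hf hg ihf ihg =>
    obtain ⟨m1, L1, h1⟩ := ihf
    obtain ⟨m2, L2, h2⟩ := ihg
    refine ⟨m1 + m2, 0 ^ m2 * L1 + 0 ^ m1 * L2, ?_⟩
    have := ((tendsto_B0.pow m2).mul h1).add ((tendsto_B0.pow m1).mul h2)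
    apply Tendsto.congr _ this
    intro s
    ring
  | @mul f g hf hg ihf ihg =>
    obtain ⟨m1, L1, h1⟩ := ihf
    obtain ⟨m2, L2, h2⟩ := ihg
    refine ⟨m1 + m2, L1 * L2, ?_⟩
    apply Tendsto.congr _ (h1.mul h2)
    intro s
    ring

-- pole structure at 1
lemma Nice.pole1 {q : ℝ → ℝ} (hq : Nice q) :
    ∃ (i : ℕ) (L : ℝ), Tendsto (fun s => (1 - s) ^ i * q s) (𝓝[<] (1:ℝ)) (𝓝 L) := by
  induction hq with
  | const k => exact ⟨0, k, by simpa using tendsto_const_nhds⟩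
  | va =>
    refine ⟨1, 1, ?_⟩
    apply Tendsto.congr' _ (tendsto_const_nhds : Tendsto (fun _ : ℝ => (1:ℝ)) _ _)
    filter_upwards [mem_Ioo_ev1] with s hs
    simp only [pow_one]
    rw [A, mul_inv_cancel₀ (sub_ne hs)]
  | vb => exact ⟨0, 1, by simpa using tendsto_B1⟩
  | vc => exact ⟨0, 1, by simpa using tendsto_C1⟩
  | @add f g hf hg ihf ihg =>
    obtain ⟨m1, L1, h1⟩ := ihf
    obtain ⟨m2, L2, h2⟩ := ihg
    refine ⟨m1 + m2, 0 ^ m2 * L1 + 0 ^ m1 * L2, ?_⟩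
    have := ((tendsto_one_sub_1.pow m2).mul h1).add ((tendsto_one_sub_1.pow m1).mul h2)
    apply Tendsto.congr _ this
    intro s
    ring
  | @mul f g hf hg ihf ihg =>
    obtain ⟨m1, L1, h1⟩ := ihf
    obtain ⟨m2, L2, h2⟩ := ihg
    refine ⟨m1 + m2, L1 * L2, ?_⟩
    apply Tendsto.congr _ (h1.mul h2)
    intro s
    ring


noncomputable def R (nu : ℝ) (s : ℝ) : ℝ := B s ^ (nu - 1)
noncomputable def E (x y : ℝ) (s : ℝ) : ℝ := Real.exp (-x / B s - y * B s)

variable {x y nu : ℝ}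

lemma hasDerivAt_R {s : ℝ} (hs : s ∈ Set.Ioo (0:ℝ) 1) :
    HasDerivAt (R nu) (R nu s * ((nu - 1) * C s * W s * A s ^ 2)) s := by
  have hb := B_pos hs
  have h := (Real.hasDerivAt_rpow_const (p := nu - 1) (Or.inl hb.ne')).comp s (hasDerivAt_B hs)
  refine h.congr_deriv ?_
  have key : B s ^ (nu - 1 - 1) = B s ^ (nu - 1) * (B s)⁻¹ := by
    rw [Real.rpow_sub hb, Real.rpow_one, div_eq_mul_inv]
  have hc : C s = (B s)⁻¹ := rfl
  rw [key, R, hc]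
  ring

lemma hasDerivAt_E {s : ℝ} (hs : s ∈ Set.Ioo (0:ℝ) 1) :
    HasDerivAt (E x y) (E x y s * ((x * C s ^ 2 - y) * W s * A s ^ 2)) s := by
  have hb := B_pos hs
  have h1 : HasDerivAt (fun t => -x / B t)
      ((0 * B s - -x * (W s * A s ^ 2)) / B s ^ 2) s :=
    (hasDerivAt_const s (-x)).div (hasDerivAt_B hs) hb.ne'
  have h2 : HasDerivAt (fun t => y * B t) (y * (W s * A s ^ 2)) s :=
    (hasDerivAt_B hs).const_mul y
  have h3 := ((h1.sub h2).exp : HasDerivAt (fun t => Real.exp (-x / B t - y * B t)) _ s)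
  refine h3.congr_deriv ?_
  rw [E]
  have hc : C s = (B s)⁻¹ := rfl
  rw [hc]
  simp only [Pi.sub_apply]
  field_simp
  ring

lemma hasDerivAt_W {s : ℝ} (hs : s ∈ Set.Ioo (0:ℝ) 1) :
    HasDerivAt W ((-2) * B s * A s ^ 2 * W s) s := by
  have h := (hasDerivAt_const s 1).sub (((hasDerivAt_B hs)).pow 2)
  refine h.congr_deriv ?_
  simp only [Nat.cast_ofNat, pow_one]
  ring

lemma key_step (hq : Nice q) :
    ∃ q2 : ℝ → ℝ, Nice q2 ∧ ∀ s ∈ Set.Ioo (0:ℝ) 1,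
      HasDerivAt (fun t => R nu t * E x y t * W t * q t)
        (R nu s * E x y s * W s * q2 s) s := by
  obtain ⟨q', hq', hd⟩ := hq.hasDerivAt
  refine ⟨fun s => ((nu - 1) * C s * W s * (A s * A s)
      + (x * (C s * C s) - y) * W s * (A s * A s)
      + (-2) * B s * (A s * A s)) * q s + q' s, ?_, fun s hs => ?_⟩
  · apply Nice.of_eq (f := fun s =>
      ((((fun _ => (nu - 1)) s * C s) * (W s * (A s * A s))
        + (((fun _ => x) s * (C s * C s) + (fun _ => (-y)) s) * (W s * (A s * A s))))
        + (((fun _ => (-2:ℝ)) s * B s) * (A s * A s))) * q s + q' s)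
    · exact (((((Nice.const (nu-1)).mul Nice.vc).mul (Nice.w.mul (Nice.va.mul Nice.va))).add
        ((((Nice.const x).mul (Nice.vc.mul Nice.vc)).add (Nice.const (-y))).mul
          (Nice.w.mul (Nice.va.mul Nice.va)))).add
        (((Nice.const (-2)).mul Nice.vb).mul (Nice.va.mul Nice.va))).mul hq |>.add
        (Nice.const 0 |> fun _ => hq')
    · intro s; ring
  · have h := (((hasDerivAt_R (nu := nu) hs).mul (hasDerivAt_E (x := x) (y := y) hs)).mul
      (hasDerivAt_W hs)).mul (hd s hs)
    refine h.congr_deriv ?_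
    simp only [Pi.mul_apply]
    ring


lemma L0 (hx : 0 < x) (α : ℝ) :
    Tendsto (fun t : ℝ => t ^ α * Real.exp (-x / t)) (𝓝[>] (0:ℝ)) (𝓝 0) := by
  have h := tendsto_rpow_mul_exp_neg_mul_atTop_nhds_zero (-α) x hx
  have h2 := h.comp tendsto_inv_nhdsGT_zero
  apply Tendsto.congr' _ h2
  filter_upwards [eventually_mem_nhdsWithin] with t ht
  simp only [Set.mem_Ioi] at ht
  simp only [Function.comp_apply]
  rw [Real.inv_rpow ht.le, Real.rpow_neg ht.le, inv_inv, div_eq_mul_inv]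

lemma cosh_decay (i : ℕ) :
    Tendsto (fun v : ℝ => (v + 1) ^ i * (Real.cosh v ^ 2)⁻¹) atTop (𝓝 0) := by
  have hshift : Tendsto (fun v : ℝ => v + 1) atTop atTop :=
    tendsto_atTop_add_const_right atTop 1 tendsto_id
  have hm1 : Tendsto (fun v : ℝ => (v + 1) ^ i * Real.exp (-(v + 1))) atTop (𝓝 0) :=
    (tendsto_pow_mul_exp_neg_atTop_nhds_zero i).comp hshift
  have hm2 : Tendsto (fun v : ℝ => Real.exp (-(v + 1))) atTop (𝓝 0) :=
    Real.tendsto_exp_neg_atTop_nhds_zero.comp hshift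
  have hm : Tendsto (fun v : ℝ => 4 * Real.exp 2 *
      ((v + 1) ^ i * Real.exp (-(v + 1)) * Real.exp (-(v + 1)))) atTop (𝓝 0) := by
    have := (hm1.mul hm2).const_mul (4 * Real.exp 2)
    simpa using this
  apply tendsto_of_tendsto_of_tendsto_of_le_of_le' tendsto_const_nhds hm
  · filter_upwards [eventually_ge_atTop (0:ℝ)] with v hv
    positivity
  · filter_upwards [eventually_ge_atTop (0:ℝ)] with v hv
    have hcosh : Real.exp v / 2 ≤ Real.cosh v := by
      rw [Real.cosh_eq]
      have := (Real.exp_pos (-v)).le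
      linarith
    have hsq : (Real.exp v / 2) ^ 2 ≤ Real.cosh v ^ 2 := by
      apply pow_le_pow_left₀ (by positivity) hcosh
    have hinv : (Real.cosh v ^ 2)⁻¹ ≤ ((Real.exp v / 2) ^ 2)⁻¹ := by
      apply inv_anti₀ (by positivity) hsq
    have hval : ((Real.exp v / 2) ^ 2)⁻¹
        = 4 * Real.exp 2 * (Real.exp (-(v+1)) * Real.exp (-(v+1))) := by
      have h4 : Real.exp (-(v+1)) = (Real.exp v * Real.exp 1)⁻¹ := by
        rw [← Real.exp_add, ← Real.exp_neg]
      have h2 : Real.exp 2 = Real.exp 1 * Real.exp 1 := by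
        rw [← Real.exp_add]; norm_num
      have ht := (Real.exp_pos v).ne'
      have h1 := (Real.exp_pos 1).ne'
      rw [h4, h2]
      field_simp
      ring
    have hp : (0:ℝ) ≤ (v + 1) ^ i := by positivity
    calc (v + 1) ^ i * (Real.cosh v ^ 2)⁻¹
        ≤ (v + 1) ^ i * ((Real.exp v / 2) ^ 2)⁻¹ := by
          exact mul_le_mul_of_nonneg_left hinv hp
      _ = 4 * Real.exp 2 * ((v + 1) ^ i * Real.exp (-(v+1)) * Real.exp (-(v+1))) := by
          rw [hval]; ring

lemma tendsto_AiW (i : ℕ) :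
    Tendsto (fun s => A s ^ i * W s) (𝓝[<] (1:ℝ)) (𝓝 0) := by
  have h := (cosh_decay i).comp tendsto_U1
  apply Tendsto.congr' _ h
  filter_upwards [mem_Ioo_ev1] with s hs
  simp only [Function.comp_apply]
  have hA : A s = U s + 1 := by
    rw [A, U]
    field_simp [sub_ne hs]
    ring
  have hW : W s = (Real.cosh (U s) ^ 2)⁻¹ := one_sub_tanh_sq (U s)
  rw [hA, hW]

lemma tend0 (hx : 0 < x) (hq : Nice q) :
    Tendsto (fun s => R nu s * E x y s * W s * q s) (𝓝[>] (0:ℝ)) (𝓝 0) := by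
  obtain ⟨m, L, hm⟩ := hq.pole0
  have h1 : Tendsto (fun s => B s ^ (nu - 1 - m) * Real.exp (-x / B s)) (𝓝[>] (0:ℝ)) (𝓝 0) :=
    (L0 hx (nu - 1 - m)).comp tendsto_B0'
  have h2 : Tendsto (fun s => Real.exp (-(y * B s))) (𝓝[>] (0:ℝ)) (𝓝 1) := by
    have h0 : Tendsto (fun s => -(y * B s)) (𝓝[>] (0:ℝ)) (𝓝 0) := by
      simpa using (tendsto_B0.const_mul y).neg
    have := (Real.continuous_exp.tendsto 0).comp h0
    rw [Real.exp_zero] at this; exact this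
  have h3 : Tendsto W (𝓝[>] (0:ℝ)) (𝓝 1) := by
    have : Tendsto (fun s => 1 - B s ^ 2) (𝓝[>] (0:ℝ)) (𝓝 (1 - 0 ^ 2)) :=
      tendsto_const_nhds.sub (tendsto_B0.pow 2)
    norm_num at this; exact this
  have htot := h1.mul (h2.mul (h3.mul hm))
  rw [show (0:ℝ) * (1 * (1 * L)) = 0 from by ring] at htot
  apply Tendsto.congr' _ htot
  filter_upwards [mem_Ioo_ev0] with s hs
  have hb := B_pos hs
  have hBm : B s ^ (nu - 1 - m) * B s ^ (m : ℕ) = B s ^ (nu - 1) := by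
    rw [← Real.rpow_natCast (B s) m, ← Real.rpow_add hb]
    norm_num
  rw [R, E, show -x / B s - y * B s = -x / B s + -(y * B s) from by ring, Real.exp_add, ← hBm]
  ring

lemma tend1 (hq : Nice q) :
    Tendsto (fun s => R nu s * E x y s * W s * q s) (𝓝[<] (1:ℝ)) (𝓝 0) := by
  obtain ⟨i, L, hL⟩ := hq.pole1
  have h1 : Tendsto (R nu) (𝓝[<] (1:ℝ)) (𝓝 1) := by
    have hc := (Real.continuousAt_rpow_const 1 (nu - 1) (Or.inl one_ne_zero)).tendsto
    have := hc.comp tendsto_B1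
    rw [Real.one_rpow] at this; exact this
  have h2 : Tendsto (E x y) (𝓝[<] (1:ℝ)) (𝓝 (Real.exp (-x / 1 - y * 1))) := by
    have hφ : Tendsto (fun s => -x / B s - y * B s) (𝓝[<] (1:ℝ)) (𝓝 (-x / 1 - y * 1)) :=
      (tendsto_const_nhds.div tendsto_B1 one_ne_zero).sub (tendsto_B1.const_mul y)
    exact (Real.continuous_exp.tendsto _).comp hφ
  have h3 := tendsto_AiW i
  have htot := (h1.mul h2).mul (h3.mul hL)
  rw [show (1:ℝ) * Real.exp (-x / 1 - y * 1) * (0 * L) = 0 from by ring] at htot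
  apply Tendsto.congr' _ htot
  filter_upwards [mem_Ioo_ev1] with s hs
  have hone : A s ^ i * (1 - s) ^ i = 1 := by
    rw [← mul_pow, A, inv_mul_cancel₀ (sub_ne hs), one_pow]
  linear_combination (R nu s * E x y s * W s * q s) * hone


lemma iter (hx : 0 < x) {g : ℝ → ℝ}
    (hg : ∀ s : ℝ, g s =
      Real.tanh (s / (1 - s)) ^ (nu - 1) *
        Real.exp (-x / Real.tanh (s / (1 - s)) - y * Real.tanh (s / (1 - s)))
      / ((1 - s) ^ 2 * Real.cosh (s / (1 - s)) ^ 2)) (n : ℕ) :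
    ∃ q : ℝ → ℝ, Nice q ∧ ∀ s ∈ Set.Ioo (0:ℝ) 1,
      iteratedDeriv n g s = R nu s * E x y s * W s * q s := by
  induction n with
  | zero =>
    refine ⟨fun s => A s * A s, Nice.va.mul Nice.va, fun s hs => ?_⟩
    rw [iteratedDeriv_zero, hg s]
    simp only [R, E, W, B, A, U]
    rw [one_sub_tanh_sq]
    have h3 : ((1 - s):ℝ)⁻¹ * (1 - s)⁻¹ = (((1:ℝ) - s) ^ 2)⁻¹ := by
      rw [← mul_inv, sq]
    rw [div_eq_mul_inv, mul_inv, ← h3]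
    ring
  | succ n ih =>
    obtain ⟨q, hq, heq⟩ := ih
    obtain ⟨q2, hq2, hd⟩ := key_step (x := x) (y := y) (nu := nu) hq
    refine ⟨q2, hq2, fun s hs => ?_⟩
    rw [iteratedDeriv_succ]
    have hev : iteratedDeriv n g =ᶠ[𝓝 s] fun t => R nu t * E x y t * W t * q t :=
      Filter.eventuallyEq_of_mem (isOpen_Ioo.mem_nhds hs) heq
    rw [hev.deriv_eq]
    exact (hd s hs).deriv

end FlatAux

/-- For all real `x > 0` and all real `y`, `ν`, the transformed integrand
`g(s) = τ(s)^{ν-1} e^{-x/τ(s) - y τ(s)} / ((1-s)² cosh²(s/(1-s)))`,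
with `τ(s) = tanh(s/(1-s))`, is smooth on `(0, 1)` and, for every natural
number `n`, its `n`-th derivative tends to `0` as `s → 0⁺` and as `s → 1⁻`. -/
theorem transformed_integrand_flat_at_endpoints (x y ν : ℝ) (hx : 0 < x)
    (g : ℝ → ℝ)
    (hg : ∀ s : ℝ, g s =
      Real.tanh (s / (1 - s)) ^ (ν - 1) *
        Real.exp (-x / Real.tanh (s / (1 - s)) - y * Real.tanh (s / (1 - s)))
      / ((1 - s) ^ 2 * Real.cosh (s / (1 - s)) ^ 2)) :
    ContDiffOn ℝ (⊤ : ℕ∞) g (Set.Ioo 0 1) ∧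
      ∀ n : ℕ,
        Tendsto (iteratedDeriv n g) (nhdsWithin 0 (Set.Ioi 0)) (nhds 0) ∧
        Tendsto (iteratedDeriv n g) (nhdsWithin 1 (Set.Iio 1)) (nhds 0) := by
  constructor
  · have cdR : ContDiffOn ℝ (⊤ : ℕ∞) (FlatAux.R ν) (Set.Ioo 0 1) := by
      intro s hs
      have hB : ContDiffAt ℝ (⊤ : ℕ∞) FlatAux.B s :=
        (FlatAux.contDiffOn_B s hs).contDiffAt (isOpen_Ioo.mem_nhds hs)
      exact (hB.rpow_const_of_ne (FlatAux.B_pos hs).ne').contDiffWithinAt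
    have cdE : ContDiffOn ℝ (⊤ : ℕ∞) (FlatAux.E x y) (Set.Ioo 0 1) := by
      apply Real.contDiff_exp.comp_contDiffOn
      exact (contDiffOn_const.div FlatAux.contDiffOn_B
        fun s hs => (FlatAux.B_pos hs).ne').sub (contDiffOn_const.mul FlatAux.contDiffOn_B)
    obtain ⟨q, hq, heq⟩ := FlatAux.iter (nu := ν) hx hg 0
    apply (((cdR.mul cdE).mul FlatAux.contDiffOn_W).mul hq.contDiffOn).congr
    intro s hs
    rw [← iteratedDeriv_zero (f := g)]
    exact heq s hs
  · intro n
    obtain ⟨q, hq, heq⟩ := FlatAux.iter (nu := ν) hx hg n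
    constructor
    · refine Tendsto.congr' ?_ (FlatAux.tend0 (x := x) (y := y) (nu := ν) hx hq)
      filter_upwards [FlatAux.mem_Ioo_ev0] with s hs
      exact (heq s hs).symm
    · refine Tendsto.congr' ?_ (FlatAux.tend1 (x := x) (y := y) (nu := ν) hq)
      filter_upwards [FlatAux.mem_Ioo_ev1] with s hs
      exact (heq s hs).symm
end

section
/- Let f : ℝ → ℝ be continuous and 1-periodic, and suppose its Fourier coefficients c_m = ∫_0^1 f(s) e^{-2πi m s} ds satisfy ∑_{m ∈ ℤ} |c_m| < ∞. Let n be a positive natural number, h = 1/n, and let T_h = h·( f(0)/2 + ∑_{k=1}^{n-1} f(k h) + f(1)/2 ) be the compound trapezoidal sum. Then the quadrature error satisfies ∫_0^1 f(s) ds - T_h = -2 ∑_{k=1}^∞ F_k, where F_k = ∫_0^1 f(s) cos(2π k s / h) ds = ∫_0^1 f(s) cos(2π k n s) ds, and the series converges absolutely. -/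
open MeasureTheory Real Finset

/-- Let `f : ℝ → ℝ` be continuous and 1-periodic with absolutely summable
Fourier coefficients `c_m = ∫_0^1 f(s) e^{-2πims} ds`. For `n > 0`, `h = 1/n`,
the error of the compound trapezoidal rule
`T_h = h (f(0)/2 + ∑_{k=1}^{n-1} f(k h) + f(1)/2)` is
`∫_0^1 f - T_h = -2 ∑_{k=1}^∞ F_k` with `F_k = ∫_0^1 f(s) cos(2πkns) ds`,
the series converging absolutely. -/
theorem trapezoidal_error_fourier (f : ℝ → ℝ) (hf : Continuous f)
    (hper : Function.Periodic f 1)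
    (c : ℤ → ℂ)
    (hc : ∀ m : ℤ, c m =
      ∫ s in (0 : ℝ)..1, (f s : ℂ) *
        Complex.exp (-(2 * Real.pi * Complex.I * (m : ℂ) * (s : ℂ))))
    (hsum : Summable fun m : ℤ => ‖c m‖)
    (n : ℕ) (hn : 0 < n)
    (F : ℕ → ℝ)
    (hF : ∀ k : ℕ, F k = ∫ s in (0 : ℝ)..1, f s * Real.cos (2 * Real.pi * k * n * s)) :
    (Summable fun k : ℕ => |F (k + 1)|) ∧
      (∫ s in (0 : ℝ)..1, f s)
          - (1 / (n : ℝ)) *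
              (f 0 / 2 + ∑ k ∈ Finset.Ico 1 n, f (k / (n : ℝ)) + f 1 / 2)
        = -2 * ∑' k : ℕ, F (k + 1) := by
  have hnR : (n : ℝ) ≠ 0 := Nat.cast_ne_zero.mpr hn.ne'
  have hnC : (n : ℂ) ≠ 0 := Nat.cast_ne_zero.mpr hn.ne'
  -- the complex lift
  have hperc : Function.Periodic (fun x => (f x : ℂ)) 1 := fun x => by simp [hper x]
  let g : C(UnitAddCircle, ℂ) :=
    ⟨hperc.lift, continuous_coinduced_dom.mpr (Complex.continuous_ofReal.comp hf)⟩
  have hg : ∀ x : ℝ, g (x : UnitAddCircle) = (f x : ℂ) := fun x => hperc.lift_coe x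
  have hcoeff : ∀ m : ℤ, fourierCoeff g m = c m := by
    intro m
    rw [fourierCoeff_eq_intervalIntegral g m 0, hc m]
    norm_num
    refine intervalIntegral.integral_congr fun x hx => ?_
    rw [hg x, mul_comm]
    congr 1
    rw [← Complex.exp_conj]
    congr 1
    simp only [map_mul, Complex.conj_I, Complex.conj_ofReal, map_ofNat, map_intCast]
    ring
  have hsc : Summable (fourierCoeff g) := by
    rw [show fourierCoeff g = c from funext hcoeff]
    exact hsum.of_norm
  have hpt : ∀ x : ℝ, HasSum
      (fun m : ℤ => c m * Complex.exp (2 * Real.pi * Complex.I * m * x)) ((f x : ℂ)) := by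
    intro x
    have h := has_pointwise_sum_fourier_series_of_summable hsc (x : UnitAddCircle)
    rw [hg x] at h
    refine h.congr_fun fun m => ?_
    rw [hcoeff m, smul_eq_mul, fourier_coe_apply]
    norm_num
  -- geometric sum at nodes
  have hnode : ∀ m : ℤ,
      ∑ k ∈ Finset.range n, Complex.exp (2 * Real.pi * Complex.I * m * (((k : ℝ) / n : ℝ) : ℂ)) =
        if (n : ℤ) ∣ m then (n : ℂ) else 0 := by
    intro m
    set z : ℂ := Complex.exp (2 * Real.pi * Complex.I * m / n) with hz
    have hzk : ∀ k : ℕ, Complex.exp (2 * Real.pi * Complex.I * m * (((k : ℝ) / n : ℝ) : ℂ)) = z ^ k := by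
      intro k
      rw [hz, ← Complex.exp_nat_mul]
      congr 1
      push_cast
      field_simp
    simp_rw [hzk]
    by_cases hd : (n : ℤ) ∣ m
    · rw [if_pos hd]
      obtain ⟨j, hj⟩ := hd
      have hz1 : z = 1 := by
        rw [hz, hj]
        rw [show 2 * (Real.pi : ℂ) * Complex.I * ((n : ℤ) * j : ℤ) / n
            = (j : ℤ) * (2 * Real.pi * Complex.I) by push_cast; field_simp]
        exact Complex.exp_int_mul_two_pi_mul_I j
      simp [hz1]
    · rw [if_neg hd]
      have hzn : z ^ n = 1 := by
        rw [hz, ← Complex.exp_nat_mul]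
        rw [show (n : ℂ) * (2 * Real.pi * Complex.I * m / n)
            = (m : ℤ) * (2 * Real.pi * Complex.I) by field_simp]
        exact Complex.exp_int_mul_two_pi_mul_I m
      have h2 : (2 * (Real.pi : ℂ) * Complex.I : ℂ) ≠ 0 := by
        simp [Real.pi_ne_zero, Complex.I_ne_zero, Complex.ofReal_ne_zero]
      have hz1 : z ≠ 1 := by
        intro h
        rw [hz, Complex.exp_eq_one_iff] at h
        obtain ⟨j, hj⟩ := h
        refine hd ⟨j, ?_⟩
        have : (m : ℂ) = (n : ℂ) * j := by
          field_simp at hj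
          apply mul_left_cancel₀ h2
          linear_combination (2 * (Real.pi : ℂ) * Complex.I) * hj
        exact_mod_cast this
      rw [geom_sum_eq hz1, hzn]
      simp
  -- key cosine identity
  have hcF : ∀ k : ℕ, c ((k : ℤ) * n) + c (-((k : ℤ) * n)) = ((2 * F k : ℝ) : ℂ) := by
    intro k
    have hint : ∀ m : ℤ, IntervalIntegrable
        (fun s : ℝ => (f s : ℂ) * Complex.exp (-(2 * Real.pi * Complex.I * (m : ℂ) * (s : ℂ))))
        volume 0 1 := by
      intro m
      exact ((Complex.continuous_ofReal.comp hf).mul (by fun_prop)).intervalIntegrable _ _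
    rw [hc, hc, ← intervalIntegral.integral_add (hint _) (hint _), hF]
    rw [show ((2 * ∫ s in (0:ℝ)..1, f s * Real.cos (2 * Real.pi * k * n * s) : ℝ) : ℂ)
        = ∫ s in (0:ℝ)..1, ((2 * (f s * Real.cos (2 * Real.pi * k * n * s)) : ℝ) : ℂ) by
      rw [intervalIntegral.integral_ofReal, intervalIntegral.integral_const_mul]]
    refine intervalIntegral.integral_congr fun s hs => ?_
    push_cast
    rw [show (2:ℂ) * ((f s : ℂ) * Complex.cos (2*(Real.pi:ℂ)*(k:ℂ)*(n:ℂ)*(s:ℂ)))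
        = (f s : ℂ) * (2 * Complex.cos (2*(Real.pi:ℂ)*(k:ℂ)*(n:ℂ)*(s:ℂ))) by ring,
      Complex.two_cos,
      show -(2*(Real.pi:ℂ)*Complex.I*((k:ℂ)*(n:ℂ))*(s:ℂ))
        = -(2*(Real.pi:ℂ)*(k:ℂ)*(n:ℂ)*(s:ℂ)) * Complex.I by ring,
      show -(2*(Real.pi:ℂ)*Complex.I*(-((k:ℂ)*(n:ℂ)))*(s:ℂ))
        = (2*(Real.pi:ℂ)*(k:ℂ)*(n:ℂ)*(s:ℂ)) * Complex.I by ring]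
    ring
  -- the trapezoidal sum as an average over nodes
  set Tr : ℝ := (1 / (n : ℝ)) *
      (f 0 / 2 + ∑ k ∈ Finset.Ico 1 n, f (k / (n : ℝ)) + f 1 / 2) with hTrdef
  have hTr : Tr = ∑ k ∈ Finset.range n, (1 / (n : ℝ)) * f ((k : ℝ) / n) := by
    rw [← Finset.mul_sum, hTrdef]
    congr 1
    have h1 : f 1 = f 0 := by simpa using hper 0
    rw [Finset.range_eq_Ico, Finset.sum_eq_sum_Ico_succ_bot hn]
    rw [h1]
    push_cast
    rw [show ((0:ℝ)/n) = 0 by ring]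
    ring
  -- build the HasSum for the trapezoidal sum
  have hTsum : HasSum (fun m : ℤ => if (n : ℤ) ∣ m then c m else 0) ((Tr : ℝ) : ℂ) := by
    have h1 : HasSum (fun m : ℤ => ∑ k ∈ Finset.range n,
        c m * Complex.exp (2 * Real.pi * Complex.I * m * (((k : ℝ) / n : ℝ) : ℂ)))
        (∑ k ∈ Finset.range n, ((f ((k : ℝ) / n) : ℝ) : ℂ)) :=
      hasSum_sum fun k _ => hpt ((k : ℝ) / n)
    have h2 := h1.mul_left ((1 : ℂ) / n)
    have h3 : (((Tr : ℝ)) : ℂ) = (1 / (n:ℂ)) * ∑ k ∈ Finset.range n, ((f ((k : ℝ) / n) : ℝ) : ℂ) := by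
      rw [hTr]
      push_cast [Finset.mul_sum]
      rfl
    rw [← h3] at h2
    refine h2.congr_fun fun m => ?_
    rw [← Finset.mul_sum, ← mul_assoc, hnode m]
    by_cases hd : (n : ℤ) ∣ m
    · rw [if_pos hd, if_pos hd]
      field_simp
    · rw [if_neg hd, if_neg hd, mul_zero]
  -- restrict to multiples of n
  have hinj : Function.Injective (fun j : ℤ => j * (n : ℤ)) := fun a b h => by
    have hnz : (n : ℤ) ≠ 0 := Int.natCast_ne_zero.mpr hn.ne'
    exact mul_right_cancel₀ hnz h
  have hzero : ∀ m : ℤ, m ∉ Set.range (fun j : ℤ => j * (n : ℤ)) →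
      (if (n : ℤ) ∣ m then c m else 0) = 0 := by
    intro m hm
    rw [if_neg]
    rintro ⟨j, hj⟩
    exact hm ⟨j, by simpa [hj] using mul_comm j (n:ℤ)⟩
  have hmul : HasSum (fun j : ℤ => c (j * (n : ℤ))) ((Tr : ℝ) : ℂ) := by
    have := (hinj.hasSum_iff hzero).mpr hTsum
    refine this.congr_fun fun j => ?_
    simp only [Function.comp_apply]
    rw [if_pos ⟨j, mul_comm _ _⟩]
  -- integral of f equals c 0
  have hI0 : c 0 = (((∫ s in (0:ℝ)..1, f s) : ℝ) : ℂ) := by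
    rw [hc 0, ← intervalIntegral.integral_ofReal]
    refine intervalIntegral.integral_congr fun s hs => ?_
    norm_num
  -- pair positive and negative terms
  have hpair : HasSum (fun k : ℕ => c ((k : ℤ) * n) + c (-((k : ℤ) * n)))
      (((Tr : ℝ) : ℂ) + c 0) := by
    have h := hmul.nat_add_neg
    simp only [zero_mul] at h
    refine h.congr_fun fun k => by rw [neg_mul]
  have hpairF : HasSum (fun k : ℕ => ((2 * F k : ℝ) : ℂ)) (((Tr : ℝ) : ℂ) + c 0) :=
    hpair.congr_fun fun k => (hcF k).symm
  -- drop the k = 0 term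
  have hshift : HasSum (fun k : ℕ => ((2 * F (k + 1) : ℝ) : ℂ))
      ((((Tr : ℝ) : ℂ) + c 0) - ∑ i ∈ Finset.range 1, ((2 * F i : ℝ) : ℂ)) :=
    (hasSum_nat_add_iff' 1).mpr hpairF
  have hF0 : ((2 * F 0 : ℝ) : ℂ) = 2 * c 0 := by
    have := hcF 0
    simp only [Nat.cast_zero, zero_mul, neg_zero] at this
    rw [← this]; ring
  have hshift' : HasSum (fun k : ℕ => (2 * F (k + 1) : ℝ))
      ((Tr - (∫ s in (0:ℝ)..1, f s)) : ℝ) := by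
    rw [← Complex.hasSum_ofReal]
    convert hshift using 1
    rw [Finset.sum_range_one, hF0, hI0]
    push_cast
    ring
  have hFsummable : HasSum (fun k : ℕ => F (k + 1))
      ((Tr - (∫ s in (0:ℝ)..1, f s)) / 2) := by
    have := hshift'.div_const 2
    refine this.congr_fun fun k => by ring
  constructor
  · -- absolute summability
    have hb : Summable (fun k : ℕ => (‖c (((k:ℤ)+1) * n)‖ + ‖c (-(((k:ℤ)+1) * n))‖) / 2) := by
      have i1 : Function.Injective (fun k : ℕ => ((k : ℤ) + 1) * n) := by
        intro a b h
        simp only at h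
        have := hinj h
        omega
      have i2 : Function.Injective (fun k : ℕ => -(((k : ℤ) + 1) * n)) := by
        intro a b h
        simp only [neg_inj] at h
        have := hinj h
        omega
      exact ((hsum.comp_injective i1).add (hsum.comp_injective i2)).div_const 2
    refine hb.of_nonneg_of_le (fun k => abs_nonneg _) fun k => ?_
    have h := hcF (k + 1)
    have : |2 * F (k + 1)| ≤ ‖c (((k:ℤ)+1) * n)‖ + ‖c (-(((k:ℤ)+1) * n))‖ := by
      have h2 : ‖((2 * F (k+1) : ℝ) : ℂ)‖ = |2 * F (k + 1)| := Complex.norm_real _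
      rw [← h2, ← h]
      push_cast
      exact norm_add_le _ _
    rw [abs_mul, abs_two] at this
    linarith [abs_nonneg (F (k+1))]
  · rw [hFsummable.tsum_eq]
    ring
end

section
/- Let f : ℝ → ℝ be continuous and 1-periodic, and suppose its Fourier coefficients c_m = ∫_0^1 f(s) e^{-2πi m s} ds satisfy ∑_{m ∈ ℤ} |c_m| < ∞. Let n be a positive natural number, h = 1/n, and let S_h = h·∑_{k=0}^{n-1} f(k h + h/2) be the shifted (midpoint) rule. Then the quadrature error satisfies ∫_0^1 f(s) ds - S_h = -2 ∑_{k=1}^∞ (-1)^k F_k, where F_k = ∫_0^1 f(s) cos(2π k n s) ds, and the series converges absolutely. -/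
set_option maxHeartbeats 1000000

open MeasureTheory Real Finset

lemma exp_sum_midpoints (n : ℕ) (hn : 0 < n) (m : ℤ) :
    ∑ k ∈ Finset.range n,
      Complex.exp (2 * Real.pi * Complex.I * m * ((k : ℂ) / n + 1 / (2 * n))) =
    if (n : ℤ) ∣ m then (n : ℂ) * (-1 : ℂ) ^ (m / n) else 0 := by
  have hn0 : (n : ℂ) ≠ 0 := Nat.cast_ne_zero.2 hn.ne'
  have hterm : ∀ k ∈ Finset.range n,
      Complex.exp (2 * Real.pi * Complex.I * m * ((k : ℂ) / n + 1 / (2 * n)))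
        = Complex.exp (Real.pi * Complex.I * m / n)
          * Complex.exp (2 * Real.pi * Complex.I * m / n) ^ k := by
    intro k _
    rw [← Complex.exp_nat_mul, ← Complex.exp_add]
    congr 1
    field_simp
    ring
  rw [Finset.sum_congr rfl hterm, ← Finset.mul_sum]
  by_cases hd : (n : ℤ) ∣ m
  · obtain ⟨j, rfl⟩ := hd
    have h1 : Complex.exp (2 * Real.pi * Complex.I * ((n : ℤ) * j : ℤ) / n) = 1 := by
      have he : (2 * (Real.pi : ℂ) * Complex.I * (((n : ℤ) * j : ℤ) : ℂ) / n)
          = (j : ℂ) * (2 * Real.pi * Complex.I) := by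
        push_cast
        field_simp
      rw [he, Complex.exp_int_mul_two_pi_mul_I]
    have h2 : Complex.exp (Real.pi * Complex.I * ((n : ℤ) * j : ℤ) / n) = (-1 : ℂ) ^ j := by
      have he : ((Real.pi : ℂ) * Complex.I * (((n : ℤ) * j : ℤ) : ℂ) / n)
          = (j : ℂ) * (Real.pi * Complex.I) := by
        push_cast
        field_simp
      rw [he]
      rw [show ((j : ℂ)) * ((Real.pi : ℂ) * Complex.I)
          = ((j : ℤ) : ℂ) * ((Real.pi : ℂ) * Complex.I) by norm_num]
      rw [Complex.exp_int_mul, Complex.exp_pi_mul_I]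
    have hdv : ((n : ℤ) * j) / (n : ℤ) = j :=
      Int.mul_ediv_cancel_left _ (by exact_mod_cast hn.ne')
    rw [h1, h2, if_pos (dvd_mul_right (n : ℤ) j), hdv]
    simp [mul_comm]
  · have hne : (2 * (Real.pi : ℂ) * Complex.I) ≠ 0 := by
      simp [Real.pi_ne_zero, Complex.I_ne_zero, Complex.ofReal_ne_zero]
    have hζn : Complex.exp (2 * Real.pi * Complex.I * m / n) ^ n = 1 := by
      rw [← Complex.exp_nat_mul]
      have he : (n : ℂ) * (2 * Real.pi * Complex.I * m / n)
          = (m : ℂ) * (2 * Real.pi * Complex.I) := by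
        field_simp
      rw [he, Complex.exp_int_mul_two_pi_mul_I]
    have hζ1 : Complex.exp (2 * Real.pi * Complex.I * m / n) ≠ 1 := by
      intro h
      rw [Complex.exp_eq_one_iff] at h
      obtain ⟨k, hk⟩ := h
      apply hd
      refine ⟨k, ?_⟩
      have h2 : (m : ℂ) = (n : ℂ) * k := by
        field_simp at hk
        apply mul_left_cancel₀ hne
        linear_combination (2 * (Real.pi : ℂ) * Complex.I) * hk
      exact_mod_cast h2
    rw [geom_sum_eq hζ1, hζn]
    simp [hd]

/-- Let `f : ℝ → ℝ` be continuous and 1-periodic with absolutely summable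
Fourier coefficients `c_m = ∫_0^1 f(s) e^{-2πims} ds`. For `n > 0`, `h = 1/n`,
the error of the shifted (midpoint) rule `S_h = h ∑_{k=0}^{n-1} f(k h + h/2)` is
`∫_0^1 f - S_h = -2 ∑_{k=1}^∞ (-1)^k F_k` with
`F_k = ∫_0^1 f(s) cos(2πkns) ds`, the series converging absolutely. -/
theorem midpoint_error_fourier (f : ℝ → ℝ) (hf : Continuous f)
    (hper : Function.Periodic f 1)
    (c : ℤ → ℂ)
    (hc : ∀ m : ℤ, c m =
      ∫ s in (0 : ℝ)..1, (f s : ℂ) *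
        Complex.exp (-(2 * Real.pi * Complex.I * (m : ℂ) * (s : ℂ))))
    (hsum : Summable fun m : ℤ => ‖c m‖)
    (n : ℕ) (hn : 0 < n)
    (F : ℕ → ℝ)
    (hF : ∀ k : ℕ, F k = ∫ s in (0 : ℝ)..1, f s * Real.cos (2 * Real.pi * k * n * s)) :
    (Summable fun k : ℕ => |F (k + 1)|) ∧
      (∫ s in (0 : ℝ)..1, f s)
          - (1 / (n : ℝ)) *
              ∑ k ∈ Finset.range n, f (k / (n : ℝ) + 1 / (2 * n : ℝ))
        = -2 * ∑' k : ℕ, (-1 : ℝ) ^ (k + 1) * F (k + 1) := by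
  haveI : Fact (0 < (1 : ℝ)) := ⟨one_pos⟩
  have hn0 : (n : ℝ) ≠ 0 := Nat.cast_ne_zero.2 hn.ne'
  have hnz : (n : ℤ) ≠ 0 := Int.natCast_ne_zero.2 hn.ne'
  -- the function on the circle
  have hperc : Function.Periodic (fun x : ℝ => (f x : ℂ)) 1 := fun x => by
    simp [hper x]
  set g : C(AddCircle (1 : ℝ), ℂ) :=
    ⟨hperc.lift, Complex.continuous_ofReal.comp hf |>.quotient_liftOn' _⟩ with hg
  have hgx : ∀ x : ℝ, g (x : AddCircle (1 : ℝ)) = (f x : ℂ) := fun x => rfl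
  -- Fourier coefficients of g are c
  have hcoeff : ∀ m : ℤ, fourierCoeff (⇑g) m = c m := by
    intro m
    rw [fourierCoeff_eq_intervalIntegral (⇑g) m 0, hc m]
    norm_num
    apply intervalIntegral.integral_congr
    intro s _
    simp only [hgx]
    have hconj : (starRingEnd ℂ) (Complex.exp (2 * Real.pi * Complex.I * m * s))
        = Complex.exp (-(2 * Real.pi * Complex.I * m * s)) := by
      rw [← Complex.exp_conj]
      congr 1
      simp only [map_mul, Complex.conj_I, Complex.conj_ofReal, map_ofNat, map_intCast]
      ring
    rw [hconj, mul_comm]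
  have hSummable : Summable (fourierCoeff (⇑g)) := by
    apply Summable.of_norm
    simpa only [hcoeff] using hsum
  -- pointwise Fourier inversion
  have hpt : ∀ x : ℝ,
      HasSum (fun m : ℤ => c m * Complex.exp (2 * Real.pi * Complex.I * m * x)) ((f x : ℂ)) := by
    intro x
    have h := has_pointwise_sum_fourier_series_of_summable (f := g) hSummable (x : AddCircle (1 : ℝ))
    simp only [hcoeff, fourier_coe_apply, hgx, smul_eq_mul, Complex.ofReal_one, div_one] at h
    exact h
  -- the midpoint sum
  set Sr : ℝ := (1 / (n : ℝ)) * ∑ k ∈ Finset.range n, f (k / (n : ℝ) + 1 / (2 * n : ℝ))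
    with hSrdef
  have hquad0 : HasSum (fun m : ℤ => (n : ℂ)⁻¹ * ∑ k ∈ Finset.range n,
      c m * Complex.exp (2 * Real.pi * Complex.I * m *
        (((k : ℝ) / n + 1 / (2 * n) : ℝ) : ℂ))) ((Sr : ℂ)) := by
    have h1 : HasSum (fun m : ℤ => ∑ k ∈ Finset.range n,
        c m * Complex.exp (2 * Real.pi * Complex.I * m *
          (((k : ℝ) / n + 1 / (2 * n) : ℝ) : ℂ)))
        (∑ k ∈ Finset.range n, ((f ((k : ℝ) / n + 1 / (2 * n)) : ℂ))) :=
      hasSum_sum (fun k _ => hpt _)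
    have h2 := h1.mul_left ((n : ℂ)⁻¹)
    convert h2 using 2
    · rfl
    rw [hSrdef]
    push_cast
    ring
  have hform : (fun m : ℤ => (n : ℂ)⁻¹ * ∑ k ∈ Finset.range n,
      c m * Complex.exp (2 * Real.pi * Complex.I * m *
        (((k : ℝ) / n + 1 / (2 * n) : ℝ) : ℂ)))
      = fun m : ℤ => if (n : ℤ) ∣ m then (-1 : ℂ) ^ (m / (n : ℤ)) * c m else 0 := by
    funext m
    rw [← Finset.mul_sum]
    have hre : ∀ k ∈ Finset.range n,
        Complex.exp (2 * Real.pi * Complex.I * m * (((k : ℝ) / n + 1 / (2 * n) : ℝ) : ℂ))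
          = Complex.exp (2 * Real.pi * Complex.I * m * ((k : ℂ) / n + 1 / (2 * n))) := by
      intro k _
      congr 1
      push_cast
      ring
    rw [Finset.sum_congr rfl hre, exp_sum_midpoints n hn m]
    by_cases hd : (n : ℤ) ∣ m
    · rw [if_pos hd, if_pos hd]
      have : (n : ℂ) ≠ 0 := Nat.cast_ne_zero.2 hn.ne'
      field_simp
    · rw [if_neg hd, if_neg hd, mul_zero, mul_zero]
  rw [hform] at hquad0
  -- reindex over multiples of n
  set b : ℤ → ℂ := fun j => (-1 : ℂ) ^ j * c (j * n) with hbdef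
  have hinj : Function.Injective (fun j : ℤ => j * (n : ℤ)) := fun a b h => by
    have h' : a * (n : ℤ) = b * (n : ℤ) := h
    exact mul_right_cancel₀ hnz h'
  have hbS : HasSum b ((Sr : ℂ)) := by
    have hsupp : ∀ m : ℤ, m ∉ Set.range (fun j : ℤ => j * (n : ℤ)) →
        (if (n : ℤ) ∣ m then (-1 : ℂ) ^ (m / (n : ℤ)) * c m else 0) = 0 := by
      intro m hm
      rw [if_neg]
      rintro ⟨j, hj⟩
      exact hm ⟨j, by show j * (n : ℤ) = m; rw [mul_comm]; exact hj.symm⟩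
    have h2 := (Function.Injective.hasSum_iff hinj hsupp).mpr hquad0
    have h3 : ((fun m : ℤ => if (n : ℤ) ∣ m then (-1 : ℂ) ^ (m / (n : ℤ)) * c m else 0)
        ∘ (fun j : ℤ => j * (n : ℤ))) = b := by
      funext j
      simp only [Function.comp_apply, hbdef]
      rw [if_pos (dvd_mul_left (n : ℤ) j), Int.mul_ediv_cancel _ hnz]
    rwa [h3] at h2
  -- summability of b
  have hnorm_b : ∀ j : ℤ, ‖b j‖ = ‖c (j * n)‖ := by
    intro j
    simp [hbdef, norm_zpow]
  have hsb : Summable fun j : ℤ => ‖b j‖ := by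
    simp only [hnorm_b]
    exact hsum.comp_injective hinj
  have hi1 : Function.Injective (fun k : ℕ => (k : ℤ) + 1) := fun a b h => by
    simp only at h; omega
  have hi2 : Function.Injective (fun k : ℕ => -((k : ℤ) + 1)) := fun a b h => by
    simp only at h; omega
  have sP : Summable fun k : ℕ => ‖b ((k : ℤ) + 1)‖ := hsb.comp_injective hi1
  have sQ : Summable fun k : ℕ => ‖b (-((k : ℤ) + 1))‖ := hsb.comp_injective hi2
  obtain ⟨P, hPs⟩ := Summable.of_norm sP
  obtain ⟨Q, hQs⟩ := Summable.of_norm sQ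
  have hPs' : HasSum (fun k : ℕ => b ((k + 1 : ℕ) : ℤ)) P := by
    convert hPs using 2 with k
    · rfl
    · simp
  have h0 : HasSum (fun k : ℕ => b (k : ℤ)) (P + b 0) := by
    have h := ((hasSum_nat_add_iff (f := fun k : ℕ => b (k : ℤ)) 1).mp hPs')
    simpa using h
  have htot : HasSum b (P + b 0 + Q) := h0.of_nat_of_neg_add_one hQs
  have hSrval : (Sr : ℂ) = P + b 0 + Q := hbS.unique htot
  -- c 0 is the integral
  have hb0 : b 0 = ((∫ s in (0 : ℝ)..1, f s : ℝ) : ℂ) := by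
    have : b 0 = c 0 := by simp [hbdef]
    rw [this, hc 0, ← intervalIntegral.integral_ofReal]
    apply intervalIntegral.integral_congr
    intro s _
    simp
  -- pairs of coefficients and F
  have hcF : ∀ k : ℕ, c ((k : ℤ) * n) + c (-((k : ℤ) * n)) = ((2 * F k : ℝ) : ℂ) := by
    intro k
    have i1 : IntervalIntegrable (fun s : ℝ => (f s : ℂ) *
        Complex.exp (-(2 * Real.pi * Complex.I * ((((k : ℤ) * n : ℤ)) : ℂ) * s))) volume 0 1 := by
      apply Continuous.intervalIntegrable
      fun_prop
    have i2 : IntervalIntegrable (fun s : ℝ => (f s : ℂ) *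
        Complex.exp (-(2 * Real.pi * Complex.I * (((-((k : ℤ) * n) : ℤ)) : ℂ) * s))) volume 0 1 := by
      apply Continuous.intervalIntegrable
      fun_prop
    rw [hc, hc, ← intervalIntegral.integral_add i1 i2]
    have hrhs : ((2 * F k : ℝ) : ℂ)
        = ∫ s in (0 : ℝ)..1, ((2 * (f s * Real.cos (2 * Real.pi * k * n * s)) : ℝ) : ℂ) := by
      rw [intervalIntegral.integral_ofReal, hF k]
      norm_cast
      rw [← intervalIntegral.integral_const_mul]
    rw [hrhs]
    apply intervalIntegral.integral_congr
    intro s _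
    simp only
    have e1 : (-(2 * (Real.pi : ℂ) * Complex.I * ((((k : ℤ) * n : ℤ)) : ℂ) * s))
        = -(((2 * Real.pi * k * n * s : ℝ) : ℂ) * Complex.I) := by
      push_cast
      ring
    have e2 : (-(2 * (Real.pi : ℂ) * Complex.I * (((-((k : ℤ) * n) : ℤ)) : ℂ) * s))
        = ((2 * Real.pi * k * n * s : ℝ) : ℂ) * Complex.I := by
      push_cast
      ring
    rw [e1, e2]
    rw [show (f s : ℂ) * Complex.exp (-(((2 * Real.pi * k * n * s : ℝ) : ℂ) * Complex.I))
        + (f s : ℂ) * Complex.exp (((2 * Real.pi * k * n * s : ℝ) : ℂ) * Complex.I)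
        = (f s : ℂ) * (Complex.exp (((2 * Real.pi * k * n * s : ℝ) : ℂ) * Complex.I)
          + Complex.exp (-((2 * Real.pi * k * n * s : ℝ) : ℂ) * Complex.I)) by ring]
    rw [← Complex.two_cos]
    push_cast [Complex.ofReal_cos]
    ring
  -- the paired terms
  have hterm : ∀ k : ℕ, b ((k : ℤ) + 1) + b (-((k : ℤ) + 1))
      = ((((-1 : ℝ) ^ (k + 1) * (2 * F (k + 1))) : ℝ) : ℂ) := by
    intro k
    have h1 : ((k : ℤ) + 1) = ((k + 1 : ℕ) : ℤ) := by push_cast; ring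
    simp only [hbdef]
    have hz : (-1 : ℂ) ^ (-((k : ℤ) + 1)) = (-1 : ℂ) ^ ((k : ℤ) + 1) := by
      rw [zpow_neg, ← inv_zpow, inv_neg, inv_one]
    rw [hz, neg_mul]
    have : c (-(((k : ℤ) + 1) * n)) = c (-(((k + 1 : ℕ) : ℤ) * n)) := by rw [h1]
    rw [show (-1 : ℂ) ^ ((k : ℤ) + 1) * c (((k : ℤ) + 1) * n)
        + (-1 : ℂ) ^ ((k : ℤ) + 1) * c (-(((k : ℤ) + 1) * n))
        = (-1 : ℂ) ^ ((k : ℤ) + 1) * (c (((k : ℤ) + 1) * n) + c (-(((k : ℤ) + 1) * n))) by ring]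
    rw [h1, hcF (k + 1), zpow_natCast]
    push_cast
    ring
  -- summability of |F (k+1)|
  have hsumF : Summable fun k : ℕ => |F (k + 1)| := by
    have hle : ∀ k : ℕ, |F (k + 1)| ≤ (‖b ((k : ℤ) + 1)‖ + ‖b (-((k : ℤ) + 1))‖) / 2 := by
      intro k
      have hnn : ‖b ((k : ℤ) + 1) + b (-((k : ℤ) + 1))‖ = 2 * |F (k + 1)| := by
        rw [hterm k, Complex.norm_real, Real.norm_eq_abs]
        rw [abs_mul, abs_mul, abs_pow, abs_neg, abs_one, one_pow, one_mul, abs_two]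
      have := norm_add_le (b ((k : ℤ) + 1)) (b (-((k : ℤ) + 1)))
      rw [hnn] at this
      linarith
    exact Summable.of_nonneg_of_le (fun k => abs_nonneg _) hle ((sP.add sQ).div_const 2)
  refine ⟨hsumF, ?_⟩
  -- sum of pairs
  have hPQ : P + Q = ((2 * ∑' k : ℕ, (-1 : ℝ) ^ (k + 1) * F (k + 1) : ℝ) : ℂ) := by
    have hadd := hPs.add hQs
    rw [funext hterm] at hadd
    rw [← hadd.tsum_eq, ← Complex.ofReal_tsum]
    congr 1
    rw [show (fun k : ℕ => (-1 : ℝ) ^ (k + 1) * (2 * F (k + 1)))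
        = fun k : ℕ => 2 * ((-1 : ℝ) ^ (k + 1) * F (k + 1)) from funext fun k => by ring,
      tsum_mul_left]
  -- final computation
  have hfin : ((∫ s in (0 : ℝ)..1, f s : ℝ) : ℂ) - (Sr : ℂ)
      = ((-2 * ∑' k : ℕ, (-1 : ℝ) ^ (k + 1) * F (k + 1) : ℝ) : ℂ) := by
    rw [hSrval, ← hb0]
    rw [show b 0 - (P + b 0 + Q) = -(P + Q) by ring, hPQ]
    push_cast
    ring
  rw [← Complex.ofReal_sub] at hfin
  exact_mod_cast hfin
end
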